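/- Let 0 ≤ α < 1 and let u : ℝ → ℝ be concave, non-decreasing, not constant, with u(0)=0, and u(x) ≤ C₁(x^α + 1) for x ≥ 0. Suppose Q ∼ P is a probability with dQ/dP ∈ L^∞, dP/dQ ∈ L^{α/(1-α)}(P), and E_Q V(φ) = 0 for all admissible φ. Then there exist finite constants C₄ such that for every admissible φ with E u⁻(V(φ)) < ∞: E u⁺(V(φ)) ≤ C₄ (E u⁻(V(φ)))^α + C₄. -/

import Mathlib

open MeasureTheory ProbabilityTheory Filter
open scoped ENNReal NNReal

lemma concave_neg_bound (u : ℝ → ℝ) (hconc : ConcaveOn ℝ Set.univ u)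
    (hmono : Monotone u) (hnc : ¬ ∃ k : ℝ, ∀ x : ℝ, u x = k) (hu0 : u 0 = 0) :
    ∃ m K : ℝ, 0 < m ∧ 0 ≤ K ∧ ∀ x : ℝ, x ≤ 0 → u x ≤ m * x + K := by
  push_neg at hnc
  obtain ⟨x₀, hx₀⟩ := hnc 0
  obtain ⟨p, q, hpq, hupq⟩ : ∃ p q : ℝ, p < q ∧ u p < u q := by
    rcases lt_or_gt_of_ne hx₀ with h | h
    · refine ⟨x₀, 0, ?_, by rw [hu0]; linarith⟩
      by_contra hc; push_neg at hc
      have := hmono hc; rw [hu0] at this; linarith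
    · refine ⟨0, x₀, ?_, by rw [hu0]; linarith⟩
      by_contra hc; push_neg at hc
      have := hmono hc; rw [hu0] at this; linarith
  set m := (u q - u p) / (q - p) with hm
  have hm0 : 0 < m := div_pos (by linarith) (by linarith)
  refine ⟨m, max (u p - m * p) (max (-(m * p)) 0), hm0,
    le_max_of_le_right (le_max_right _ _), ?_⟩
  intro x hx
  rcases lt_or_ge x p with hxp | hpx
  · have hslope := hconc.slope_anti_adjacent (Set.mem_univ x) (Set.mem_univ q) hxp hpq
    have hpx0 : 0 < p - x := by linarith
    rw [← hm] at hslope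
    have h2 : m * (p - x) ≤ u p - u x := by
      rw [le_div_iff₀ hpx0] at hslope; linarith
    have h3 : u p - m * p ≤ max (u p - m * p) (max (-(m * p)) 0) := le_max_left _ _
    nlinarith
  · have h1 : u x ≤ 0 := by rw [← hu0]; exact hmono hx
    have h2 : -(m * p) ≤ max (u p - m * p) (max (-(m * p)) 0) :=
      le_max_of_le_right (le_max_left _ _)
    nlinarith

theorem stmt14 {Ω : Type*} [MeasurableSpace Ω] (μ : Measure Ω) [IsProbabilityMeasure μ]
    (Q : Measure Ω) [IsProbabilityMeasure Q] (hQP : Q ≪ μ) (hPQ : μ ≪ Q)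
    (hbdd : ∃ c : NNReal, ∀ᵐ ω ∂μ, Q.rnDeriv μ ω ≤ c)
    (α : ℝ) (hα0 : 0 ≤ α) (hα1 : α < 1)
    (hmom : Integrable (fun ω => (μ.rnDeriv Q ω).toReal ^ (α / (1 - α))) μ)
    (u : ℝ → ℝ) (hconc : ConcaveOn ℝ Set.univ u) (hmono : Monotone u)
    (hnc : ¬ ∃ k : ℝ, ∀ x : ℝ, u x = k) (hu0 : u 0 = 0)
    (C₁ : ℝ) (hC₁ : 0 ≤ C₁)
    (hgrowth : ∀ x : ℝ, 0 ≤ x → u x ≤ C₁ * (x ^ α + 1)) :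
    ∃ C₄ : ℝ, 0 ≤ C₄ ∧
      ∀ V : Ω → ℝ, AEMeasurable V μ → Integrable V Q → ∫ ω, V ω ∂Q = 0 →
        Integrable (fun ω => max (-u (V ω)) 0) μ →
        ∫⁻ ω, ENNReal.ofReal (max (u (V ω)) 0) ∂μ ≤
          ENNReal.ofReal (C₄ * (∫ ω, max (-u (V ω)) 0 ∂μ) ^ α + C₄) := by
  obtain ⟨m, K, hm0, hK0, hbound⟩ := concave_neg_bound u hconc hmono hnc hu0
  obtain ⟨c, hc⟩ := hbdd
  rcases eq_or_lt_of_le hα0 with hα | hαpos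
  · -- α = 0
    refine ⟨2 * C₁, by linarith, fun V hV hVQ hVQ0 hUint => ?_⟩
    have hpt : ∀ ω, ENNReal.ofReal (max (u (V ω)) 0) ≤ ENNReal.ofReal (2 * C₁) := by
      intro ω
      apply ENNReal.ofReal_le_ofReal
      rcases le_or_gt 0 (V ω) with h | h
      · have hg := hgrowth (V ω) h
        rw [← hα, Real.rpow_zero] at hg
        exact max_le (by linarith) (by linarith)
      · have h1 : u (V ω) ≤ 0 := by rw [← hu0]; exact hmono h.le
        exact max_le (by linarith) (by linarith)
    calc ∫⁻ ω, ENNReal.ofReal (max (u (V ω)) 0) ∂μ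
        ≤ ∫⁻ _, ENNReal.ofReal (2 * C₁) ∂μ := lintegral_mono hpt
      _ = ENNReal.ofReal (2 * C₁) := by simp
      _ ≤ ENNReal.ofReal (2 * C₁ * (∫ ω, max (-u (V ω)) 0 ∂μ) ^ α + 2 * C₁) := by
          apply ENNReal.ofReal_le_ofReal
          rw [← hα, Real.rpow_zero]
          linarith
  · -- 0 < α
    have h1α : 0 < 1 - α := by linarith
    set β := α / (1 - α) with hβ
    have hβ0 : 0 ≤ β := div_nonneg hα0 h1α.le
    set D := μ.rnDeriv Q with hD
    have hDmeas : Measurable D := Measure.measurable_rnDeriv μ Q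
    have hDlt : ∀ᵐ ω ∂Q, D ω < ∞ := Measure.rnDeriv_lt_top μ Q
    have hDpos : ∀ᵐ ω ∂Q, 0 < D ω := hQP.ae_le (Measure.rnDeriv_pos hPQ)
    have hDβQ : AEMeasurable (fun ω => D ω ^ β) Q :=
      (ENNReal.continuous_rpow_const.measurable.comp hDmeas).aemeasurable
    have hMq_eq : ∫⁻ ω, D ω ^ (1 - α)⁻¹ ∂Q = ∫⁻ ω, D ω ^ β ∂μ := by
      have h1 : ∀ᵐ ω ∂Q, D ω ^ (1 - α)⁻¹ = D ω * D ω ^ β := by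
        filter_upwards [hDlt, hDpos] with ω h1 h2
        have he : (1 - α)⁻¹ = 1 + β := by rw [hβ]; field_simp; ring
        rw [he, ENNReal.rpow_add _ _ h2.ne' h1.ne, ENNReal.rpow_one]
      rw [lintegral_congr_ae h1, lintegral_rnDeriv_mul hPQ hDβQ]
    have hMq_lt : ∫⁻ ω, D ω ^ β ∂μ < ∞ := by
      have h2 : ∀ᵐ ω ∂μ, D ω ^ β = ENNReal.ofReal ((D ω).toReal ^ β) := by
        filter_upwards [hPQ.ae_le hDlt] with ω h
        rw [← ENNReal.ofReal_rpow_of_nonneg ENNReal.toReal_nonneg hβ0,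
          ENNReal.ofReal_toReal h.ne]
      rw [lintegral_congr_ae h2]
      calc ∫⁻ ω, ENNReal.ofReal ((D ω).toReal ^ β) ∂μ
          ≤ ∫⁻ ω, ‖(D ω).toReal ^ β‖ₑ ∂μ :=
            lintegral_mono fun ω => Real.ofReal_le_enorm _
        _ < ∞ := hmom.hasFiniteIntegral
    set N := (∫⁻ ω, D ω ^ β ∂μ) ^ (1 - α) with hN
    have hNne : N ≠ ∞ := (ENNReal.rpow_lt_top_of_nonneg h1α.le hMq_lt.ne).ne
    set R := (c : ENNReal) * ENNReal.ofReal (1 / m) with hR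
    have hRne : R ≠ ∞ := ENNReal.mul_ne_top ENNReal.coe_ne_top ENNReal.ofReal_ne_top
    have hNRne : N * R ^ α ≠ ∞ :=
      ENNReal.mul_ne_top hNne (ENNReal.rpow_lt_top_of_nonneg hα0 hRne).ne
    set A := (N * R ^ α).toReal with hA
    have hA0 : 0 ≤ A := ENNReal.toReal_nonneg
    have hAeq : N * R ^ α = ENNReal.ofReal A := (ENNReal.ofReal_toReal hNRne).symm
    have hKα : 0 ≤ K ^ α := Real.rpow_nonneg hK0 α
    refine ⟨C₁ * (A + A * K ^ α + 1), by positivity, fun V hV hVQ hVQ0 hUint => ?_⟩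
    set I := ∫ ω, max (-u (V ω)) 0 ∂μ with hI
    have hI0 : 0 ≤ I := integral_nonneg fun ω => le_max_right _ _
    have hIα : 0 ≤ I ^ α := Real.rpow_nonneg hI0 α
    -- measurability
    have hVQm : AEMeasurable V Q := hV.mono_ac hQP
    set W : Ω → ENNReal := fun ω => ENNReal.ofReal (max (V ω) 0) with hW
    have hWQ : AEMeasurable W Q :=
      ENNReal.measurable_ofReal.comp_aemeasurable (hVQm.max aemeasurable_const)
    have hWμ : AEMeasurable W μ :=
      ENNReal.measurable_ofReal.comp_aemeasurable (hV.max aemeasurable_const)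
    have hWαQ : AEMeasurable (fun ω => W ω ^ α) Q :=
      ENNReal.continuous_rpow_const.measurable.comp_aemeasurable hWQ
    have hWαμ : AEMeasurable (fun ω => W ω ^ α) μ :=
      ENNReal.continuous_rpow_const.measurable.comp_aemeasurable hWμ
    have hum : Measurable u := hmono.measurable
    have huV : AEMeasurable (fun ω => ENNReal.ofReal (max (-u (V ω)) 0)) μ :=
      ENNReal.measurable_ofReal.comp_aemeasurable
        (((hum.comp_aemeasurable hV).neg).max aemeasurable_const)
    -- Hölder
    have hpq : Real.HolderConjugate (1 - α)⁻¹ α⁻¹ := by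
      rw [Real.holderConjugate_iff]; constructor
      · rw [one_lt_inv_iff₀]; exact ⟨h1α, by linarith⟩
      · rw [inv_inv, inv_inv]; ring
    have hHolder : ∫⁻ ω, W ω ^ α ∂μ ≤ N * (∫⁻ ω, W ω ∂Q) ^ α := by
      have hchg : ∫⁻ ω, W ω ^ α ∂μ = ∫⁻ ω, D ω * W ω ^ α ∂Q :=
        (lintegral_rnDeriv_mul hPQ hWαQ).symm
      have h := ENNReal.lintegral_mul_le_Lp_mul_Lq Q hpq hDmeas.aemeasurable hWαQ
      simp only [Pi.mul_apply] at h
      rw [hchg]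
      refine h.trans (le_of_eq ?_)
      have h1 : (1 : ℝ) / (1 - α)⁻¹ = 1 - α := by rw [one_div, inv_inv]
      have h2 : (1 : ℝ) / α⁻¹ = α := by rw [one_div, inv_inv]
      have h3 : ∀ ω, (W ω ^ α) ^ α⁻¹ = W ω := fun ω => by
        rw [← ENNReal.rpow_mul, mul_inv_cancel₀ hαpos.ne', ENNReal.rpow_one]
      rw [h1, h2, hMq_eq]
      congr 1
      exact congrArg (· ^ α) (lintegral_congr fun ω => h3 ω)
    -- bound on ∫⁻ W dQ
    have hposneg : ∫ ω, max (V ω) 0 ∂Q = ∫ ω, max (-V ω) 0 ∂Q := by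
      have h := integral_sub hVQ.pos_part hVQ.neg_part
      simp only [max_zero_sub_max_neg_zero_eq_self] at h
      rw [hVQ0] at h
      linarith [h]
    have hWQint : ∫⁻ ω, W ω ∂Q = ENNReal.ofReal (∫ ω, max (-V ω) 0 ∂Q) := by
      rw [← hposneg]
      exact (ofReal_integral_eq_lintegral_ofReal hVQ.pos_part
        (ae_of_all _ fun ω => le_max_right _ _)).symm
    have hchg2 : ENNReal.ofReal (∫ ω, max (-V ω) 0 ∂Q)
        = ∫⁻ ω, Q.rnDeriv μ ω * ENNReal.ofReal (max (-V ω) 0) ∂μ := by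
      rw [ofReal_integral_eq_lintegral_ofReal hVQ.neg_part
        (ae_of_all _ fun ω => le_max_right _ _)]
      exact (lintegral_rnDeriv_mul hQP
        (ENNReal.measurable_ofReal.comp_aemeasurable ((hV.neg).max aemeasurable_const))).symm
    have hptneg : ∀ ω, ENNReal.ofReal (max (-V ω) 0)
        ≤ ENNReal.ofReal ((max (-u (V ω)) 0 + K) / m) := by
      intro ω
      apply ENNReal.ofReal_le_ofReal
      have hden : (0:ℝ) ≤ (max (-u (V ω)) 0 + K) / m := by positivity
      apply max_le _ hden
      rcases le_or_gt (V ω) 0 with h | h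
      · rw [le_div_iff₀ hm0]
        have := hbound (V ω) h
        have h2 : -u (V ω) ≤ max (-u (V ω)) 0 := le_max_left _ _
        nlinarith
      · linarith
    have hWdQ : ∫⁻ ω, W ω ∂Q ≤ R * ENNReal.ofReal (I + K) := by
      rw [hWQint, hchg2]
      calc ∫⁻ ω, Q.rnDeriv μ ω * ENNReal.ofReal (max (-V ω) 0) ∂μ
          ≤ ∫⁻ ω, (c : ENNReal) * ENNReal.ofReal (max (-V ω) 0) ∂μ := by
            refine lintegral_mono_ae ?_
            filter_upwards [hc] with ω h
            gcongr
        _ = (c : ENNReal) * ∫⁻ ω, ENNReal.ofReal (max (-V ω) 0) ∂μ :=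
            lintegral_const_mul' _ _ ENNReal.coe_ne_top
        _ ≤ (c : ENNReal) * ∫⁻ ω, ENNReal.ofReal ((max (-u (V ω)) 0 + K) / m) ∂μ := by
            exact mul_le_mul_right (lintegral_mono hptneg) _
        _ = R * ENNReal.ofReal (I + K) := by
            have hrw : ∀ ω, ENNReal.ofReal ((max (-u (V ω)) 0 + K) / m)
                = ENNReal.ofReal (1 / m) *
                  (ENNReal.ofReal (max (-u (V ω)) 0) + ENNReal.ofReal K) := by
              intro ω
              rw [← ENNReal.ofReal_add (le_max_right _ _) hK0, ← ENNReal.ofReal_mul (by positivity)]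
              congr 1
              field_simp
            simp only [hrw]
            rw [lintegral_const_mul' _ _ ENNReal.ofReal_ne_top,
              lintegral_add_left' huV, lintegral_const, measure_univ, mul_one]
            rw [← ofReal_integral_eq_lintegral_ofReal hUint
              (ae_of_all _ fun ω => le_max_right _ _), ← hI,
              ← ENNReal.ofReal_add hI0 hK0, hR]
            ring
    -- combine
    have hsplit : ENNReal.ofReal (I + K) ^ α ≤ ENNReal.ofReal (I ^ α) + ENNReal.ofReal (K ^ α) := by
      rw [ENNReal.ofReal_add hI0 hK0]
      calc (ENNReal.ofReal I + ENNReal.ofReal K) ^ α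
          ≤ ENNReal.ofReal I ^ α + ENNReal.ofReal K ^ α :=
            ENNReal.rpow_add_le_add_rpow _ _ hα0 hα1.le
        _ = ENNReal.ofReal (I ^ α) + ENNReal.ofReal (K ^ α) := by
            rw [ENNReal.ofReal_rpow_of_nonneg hI0 hα0, ENNReal.ofReal_rpow_of_nonneg hK0 hα0]
    have hWα_bound : ∫⁻ ω, W ω ^ α ∂μ ≤ ENNReal.ofReal (A * (I ^ α + K ^ α)) := by
      calc ∫⁻ ω, W ω ^ α ∂μ ≤ N * (∫⁻ ω, W ω ∂Q) ^ α := hHolder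
        _ ≤ N * (R * ENNReal.ofReal (I + K)) ^ α := by gcongr
        _ = N * R ^ α * ENNReal.ofReal (I + K) ^ α := by
            rw [ENNReal.mul_rpow_of_nonneg _ _ hα0]; ring
        _ ≤ N * R ^ α * (ENNReal.ofReal (I ^ α) + ENNReal.ofReal (K ^ α)) := by
            gcongr
        _ = ENNReal.ofReal (A * (I ^ α + K ^ α)) := by
            rw [hAeq, ← ENNReal.ofReal_add hIα hKα, ← ENNReal.ofReal_mul hA0]
    -- growth pointwise bound
    have hpt1 : ∀ ω, ENNReal.ofReal (max (u (V ω)) 0)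
        ≤ ENNReal.ofReal C₁ * (W ω ^ α + 1) := by
      intro ω
      rcases le_or_gt 0 (V ω) with h | h
      · have hmax : max (V ω) 0 = V ω := max_eq_left h
        have hWeq : W ω ^ α = ENNReal.ofReal (V ω ^ α) := by
          rw [hW]; simp only []
          rw [hmax, ENNReal.ofReal_rpow_of_nonneg h hα0]
        rw [hWeq, ← ENNReal.ofReal_one, ← ENNReal.ofReal_add (Real.rpow_nonneg h α) zero_le_one,
          ← ENNReal.ofReal_mul hC₁]
        apply ENNReal.ofReal_le_ofReal
        refine max_le (hgrowth _ h) ?_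
        have : (0:ℝ) ≤ V ω ^ α := Real.rpow_nonneg h α
        positivity
      · have h1 : u (V ω) ≤ 0 := by rw [← hu0]; exact hmono h.le
        rw [max_eq_right h1, ENNReal.ofReal_zero]
        exact zero_le
    calc ∫⁻ ω, ENNReal.ofReal (max (u (V ω)) 0) ∂μ
        ≤ ∫⁻ ω, ENNReal.ofReal C₁ * (W ω ^ α + 1) ∂μ := lintegral_mono hpt1
      _ = ENNReal.ofReal C₁ * ((∫⁻ ω, W ω ^ α ∂μ) + 1) := by
          rw [lintegral_const_mul' _ _ ENNReal.ofReal_ne_top,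
            lintegral_add_left' hWαμ, lintegral_const, measure_univ, mul_one]
      _ ≤ ENNReal.ofReal C₁ * (ENNReal.ofReal (A * (I ^ α + K ^ α)) + 1) := by gcongr
      _ = ENNReal.ofReal (C₁ * (A * (I ^ α + K ^ α) + 1)) := by
          rw [← ENNReal.ofReal_one, ← ENNReal.ofReal_add (by positivity) zero_le_one,
            ← ENNReal.ofReal_mul hC₁]
      _ ≤ ENNReal.ofReal (C₁ * (A + A * K ^ α + 1) * I ^ α + C₁ * (A + A * K ^ α + 1)) := by
          apply ENNReal.ofReal_le_ofReal
          nlinarith [mul_nonneg hA0 hIα, mul_nonneg hA0 hKα, mul_nonneg (mul_nonneg hA0 hKα) hIα,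
            mul_nonneg hC₁ (mul_nonneg (mul_nonneg hA0 hKα) hIα), mul_nonneg hC₁ hIα]
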